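/- Let G be a group with an endomorphism F whose Lang map y ↦ y⁻¹F(y) is surjective, let H ≤ G with F(H) = H, and let Y be the G-conjugation orbit of H. Define τ : N_G(H) → (Y^F / G^F-conjugacy) by y ↦ (class of xHx⁻¹) where x⁻¹F(x) = y. Then τ is well-defined (independent of the choice of x with x⁻¹F(x) = y) and surjective onto the set of G^F-conjugacy classes of F-stable members of Y. -/

import Mathlib

/-- The conjugate subgroup `g K g⁻¹`. -/
def conjSub {G : Type*} [Group G] (g : G) (K : Subgroup G) : Subgroup G :=
  Subgroup.map (MulAut.conj g).toMonoidHom K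

lemma mem_conjSub {G : Type*} [Group G] {g : G} {K : Subgroup G} {z : G} :
    z ∈ conjSub g K ↔ ∃ k ∈ K, g * k * g⁻¹ = z := by
  simp [conjSub, Subgroup.mem_map]

lemma conjSub_conjSub {G : Type*} [Group G] (a b : G) (K : Subgroup G) :
    conjSub a (conjSub b K) = conjSub (a * b) K := by
  ext z
  simp only [mem_conjSub]
  constructor
  · rintro ⟨w, ⟨k, hk, rfl⟩, rfl⟩
    exact ⟨k, hk, by group⟩
  · rintro ⟨k, hk, rfl⟩
    exact ⟨b * k * b⁻¹, ⟨k, hk, rfl⟩, by group⟩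

lemma map_conjSub {G : Type*} [Group G] (F : G →* G) (x : G) (K : Subgroup G) :
    Subgroup.map F (conjSub x K) = conjSub (F x) (Subgroup.map F K) := by
  ext z
  simp only [Subgroup.mem_map, mem_conjSub]
  constructor
  · rintro ⟨w, ⟨k, hk, rfl⟩, rfl⟩
    exact ⟨F k, ⟨k, hk, rfl⟩, by simp⟩
  · rintro ⟨w, ⟨k, hk, rfl⟩, rfl⟩
    exact ⟨x * k * x⁻¹, ⟨k, hk, rfl⟩, by simp⟩

lemma conjSub_eq_self_of_mem_normalizer {G : Type*} [Group G] {y : G} {H : Subgroup G}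
    (hy : y ∈ Subgroup.normalizer (H : Set G)) : conjSub y H = H := by
  rw [Subgroup.mem_normalizer_iff] at hy
  ext z
  simp only [mem_conjSub]
  constructor
  · rintro ⟨k, hk, rfl⟩
    exact (hy k).mp hk
  · intro hz
    refine ⟨y⁻¹ * z * y, (hy _).mpr ?_, by group⟩
    simpa [mul_assoc] using hz

lemma mem_normalizer_of_conjSub_eq_self {G : Type*} [Group G] {y : G} {H : Subgroup G}
    (h : conjSub y H = H) : y ∈ Subgroup.normalizer (H : Set G) := by
  rw [Subgroup.mem_normalizer_iff]
  intro g
  constructor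
  · intro hg
    rw [← h]
    exact mem_conjSub.mpr ⟨g, hg, rfl⟩
  · intro hg
    rw [← h] at hg
    obtain ⟨k, hk, hke⟩ := mem_conjSub.mp hg
    have : k = g := by
      have h2 := hke
      simp only [mul_left_inj, mul_right_inj] at h2
      exact h2
    exact this ▸ hk

/-- paper 1.4/1.5: the map `τ : N_G(H) → Y^F/∼`, `y ↦ [xHx⁻¹]` where
`x⁻¹F(x) = y`, is well defined (lands in F-stable members of `Y`, independently of the
choice of `x` up to `G^F`-conjugacy) and surjective. -/
theorem tau_well_defined_and_surjective {G : Type*} [Group G] (F : G →* G)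
    (hLang : Function.Surjective fun y : G => y⁻¹ * F y)
    (H : Subgroup G) (hFH : Subgroup.map F H = H) :
    (∀ y ∈ Subgroup.normalizer (H : Set G), ∀ x x' : G, x⁻¹ * F x = y → x'⁻¹ * F x' = y →
      Subgroup.map F (conjSub x H) = conjSub x H ∧
        ∃ g : G, F g = g ∧ conjSub x' H = conjSub g (conjSub x H)) ∧
    ∀ H' : Subgroup G, (∃ g : G, H' = conjSub g H) → Subgroup.map F H' = H' →
      ∃ y ∈ Subgroup.normalizer (H : Set G), ∃ x : G, x⁻¹ * F x = y ∧
        ∃ g : G, F g = g ∧ H' = conjSub g (conjSub x H) := by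
  constructor
  · intro y hy x x' hx hx'
    have hFx : F x = x * y := by rw [← hx]; group
    have hFx' : F x' = x' * y := by rw [← hx']; group
    constructor
    · rw [map_conjSub, hFH, hFx, ← conjSub_conjSub,
        conjSub_eq_self_of_mem_normalizer hy]
    · refine ⟨x' * x⁻¹, ?_, ?_⟩
      · have hFxinv : F x⁻¹ = y⁻¹ * x⁻¹ := by rw [map_inv, hFx]; group
        rw [map_mul, hFx', hFxinv]; group
      · rw [conjSub_conjSub]; congr 1; group
  · intro H' ⟨a, ha⟩ hst
    refine ⟨a⁻¹ * F a, ?_, a, by group, 1, map_one F, ?_⟩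
    · apply mem_normalizer_of_conjSub_eq_self
      have h1 : conjSub (F a) H = conjSub a H := by
        rw [show conjSub (F a) H = Subgroup.map F (conjSub a H) by
          rw [map_conjSub, hFH], ← ha, hst, ha]
      have := congrArg (conjSub a⁻¹) h1
      rwa [conjSub_conjSub, conjSub_conjSub, inv_mul_cancel,
        show conjSub (1 : G) H = H by ext z; simp [mem_conjSub]] at this
    · rw [conjSub_conjSub, one_mul, ← ha]
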